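/- The complex surface X = {(x,y,z) ∈ ℂ³ : y·(x²+(y−z²)²−z⁴) = 0} is not Lipschitz normally embedded at 0: for any C ≥ 1, fixing r ∈ (0,1), the curves α(t) = (t, 0, r) and β(t) = (t, r² − √(r⁴−t²), r) for t ∈ (0, r²) lie in X, satisfy ‖α(t)−β(t)‖ = r² − √(r⁴−t²) and d_X(α(t),β(t)) ≥ t, and the ratio d_X/‖·‖ is unbounded as t → 0⁺. -/

import Mathlib

open Set Filter Metric

/-- Length of a path `γ : [0,1] → E` measured via the (extended) variation. -/
noncomputable def pathLength {E : Type*} [NormedAddCommGroup E] (γ : ℝ → E) : ENNReal :=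
  eVariationOn γ (Set.Icc 0 1)

/-- `γ` is a path in `X` from `x` to `y`, parametrized on `[0,1]`. -/
def IsPathIn {E : Type*} [NormedAddCommGroup E] (X : Set E) (x y : E) (γ : ℝ → E) : Prop :=
  ContinuousOn γ (Set.Icc 0 1) ∧ Set.MapsTo γ (Set.Icc 0 1) X ∧ γ 0 = x ∧ γ 1 = y

/-- The inner (length) distance on `X`: the infimum of the lengths of paths in `X`
joining `x` to `y`. -/
noncomputable def innerDist {E : Type*} [NormedAddCommGroup E] (X : Set E) (x y : E) : ENNReal :=
  ⨅ γ ∈ {γ : ℝ → E | IsPathIn X x y γ}, pathLength γ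

/-- Points of `ℂ³` from three coordinates. -/
noncomputable def mkc3 (a b c : ℂ) : EuclideanSpace ℂ (Fin 3) :=
  (WithLp.equiv 2 (Fin 3 → ℂ)).symm ![a, b, c]

/-- The complex surface `X = {(x,y,z) ∈ ℂ³ : y·(x²+(y−z²)²−z⁴) = 0}` of Example 3.14. -/
def X16 : Set (EuclideanSpace ℂ (Fin 3)) :=
  {p | p 1 * ((p 0) ^ 2 + (p 1 - (p 2) ^ 2) ^ 2 - (p 2) ^ 4) = 0}

noncomputable def a16 (r t : ℝ) : EuclideanSpace ℂ (Fin 3) := mkc3 (t : ℂ) 0 (r : ℂ)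

noncomputable def b16 (r t : ℝ) : EuclideanSpace ℂ (Fin 3) :=
  mkc3 (t : ℂ) ((r ^ 2 - Real.sqrt (r ^ 4 - t ^ 2) : ℝ) : ℂ) (r : ℂ)

namespace Stmt16Aux

lemma coord_le_norm (p : EuclideanSpace ℂ (Fin 3)) (i : Fin 3) : ‖p i‖ ≤ ‖p‖ := by
  rw [EuclideanSpace.norm_eq]
  have h : ‖p i‖^2 ≤ ∑ j, ‖p j‖^2 :=
    Finset.single_le_sum (f := fun j => ‖p j‖^2) (fun j _ => sq_nonneg _) (Finset.mem_univ i)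
  simpa [Real.sqrt_sq (norm_nonneg _)] using Real.sqrt_le_sqrt h

lemma t2_lt (r t : ℝ) (hr : r ∈ Set.Ioo (0:ℝ) 1) (ht : t ∈ Set.Ioo (0:ℝ) (r^2)) :
    t^2 < r^4 := by
  have := ht.1; have := ht.2
  nlinarith [hr.1]

lemma sqrt_lt (r t : ℝ) (hr : r ∈ Set.Ioo (0:ℝ) 1) (ht : t ∈ Set.Ioo (0:ℝ) (r^2)) :
    Real.sqrt (r^4 - t^2) < r^2 := by
  have h2 := t2_lt r t hr ht
  have : Real.sqrt (r^4 - t^2) < Real.sqrt (r^4) :=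
    Real.sqrt_lt_sqrt (by nlinarith) (by nlinarith [ht.1])
  calc Real.sqrt (r^4 - t^2) < Real.sqrt (r^4) := this
    _ = r^2 := by rw [show r^4 = (r^2)^2 by ring, Real.sqrt_sq (by positivity)]

lemma y_pos (r t : ℝ) (hr : r ∈ Set.Ioo (0:ℝ) 1) (ht : t ∈ Set.Ioo (0:ℝ) (r^2)) :
    0 < r^2 - Real.sqrt (r^4 - t^2) := by
  have := sqrt_lt r t hr ht; linarith

lemma sq_y (r t : ℝ) (hr : r ∈ Set.Ioo (0:ℝ) 1) (ht : t ∈ Set.Ioo (0:ℝ) (r^2)) :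
    ((r^2 - Real.sqrt (r^4 - t^2)) - r^2)^2 = r^4 - t^2 := by
  have h2 := t2_lt r t hr ht
  rw [show (r^2 - Real.sqrt (r^4 - t^2)) - r^2 = -(Real.sqrt (r^4-t^2)) by ring]
  rw [neg_pow, Real.sq_sqrt (by linarith)]
  ring

lemma a_mem (r t : ℝ) : a16 r t ∈ X16 := by
  show (a16 r t) 1 * _ = 0
  have : (a16 r t) 1 = 0 := rfl
  rw [this, zero_mul]

lemma b_mem (r t : ℝ) (hr : r ∈ Set.Ioo (0:ℝ) 1) (ht : t ∈ Set.Ioo (0:ℝ) (r^2)) :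
    b16 r t ∈ X16 := by
  set y : ℝ := r^2 - Real.sqrt (r^4 - t^2) with hy
  show (b16 r t) 1 * (((b16 r t) 0)^2 + ((b16 r t) 1 - ((b16 r t) 2)^2)^2 - ((b16 r t) 2)^4) = 0
  have h0 : (b16 r t) 0 = (t : ℂ) := rfl
  have h1 : (b16 r t) 1 = (y : ℂ) := rfl
  have h2 : (b16 r t) 2 = (r : ℂ) := rfl
  rw [h0, h1, h2]
  have key : (t^2 + (y - r^2)^2 - r^4 : ℝ) = 0 := by
    rw [sq_y r t hr ht]; ring
  have : ((t:ℂ))^2 + ((y:ℂ) - (r:ℂ)^2)^2 - (r:ℂ)^4 = ((t^2 + (y - r^2)^2 - r^4 : ℝ) : ℂ) := by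
    push_cast; ring
  rw [this, key]
  simp

lemma norm_sub (r t : ℝ) (hr : r ∈ Set.Ioo (0:ℝ) 1) (ht : t ∈ Set.Ioo (0:ℝ) (r^2)) :
    ‖a16 r t - b16 r t‖ = r^2 - Real.sqrt (r^4 - t^2) := by
  set y : ℝ := r^2 - Real.sqrt (r^4 - t^2) with hy
  have hypos := y_pos r t hr ht
  rw [EuclideanSpace.norm_eq]
  have h0 : (a16 r t - b16 r t) 0 = 0 := by
    show (a16 r t) 0 - (b16 r t) 0 = 0
    show (t:ℂ) - (t:ℂ) = 0; ring
  have h1 : (a16 r t - b16 r t) 1 = -(y:ℂ) := by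
    show (a16 r t) 1 - (b16 r t) 1 = _
    show (0:ℂ) - (y:ℂ) = _; ring
  have h2 : (a16 r t - b16 r t) 2 = 0 := by
    show (a16 r t) 2 - (b16 r t) 2 = 0
    show (r:ℂ) - (r:ℂ) = 0; ring
  rw [Fin.sum_univ_three, h0, h1, h2]
  simp only [norm_zero, norm_neg, Complex.norm_real, Real.norm_eq_abs]
  rw [abs_of_pos hypos]
  rw [show (0:ℝ)^2 + y^2 + 0^2 = y^2 by ring, Real.sqrt_sq hypos.le]

lemma innerDist_ge (r t : ℝ) (hr : r ∈ Set.Ioo (0:ℝ) 1) (ht : t ∈ Set.Ioo (0:ℝ) (r^2)) :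
    ENNReal.ofReal t ≤ innerDist X16 (a16 r t) (b16 r t) := by
  rw [innerDist]
  refine le_iInf₂ fun γ hγ => ?_
  obtain ⟨hc, hm, hα, hβ⟩ := hγ
  set y : ℝ := r^2 - Real.sqrt (r^4 - t^2) with hy
  have hypos := y_pos r t hr ht
  -- the set where the y-coordinate vanishes
  set S : Set ℝ := Set.Icc 0 1 ∩ γ ⁻¹' {p | p 1 = 0} with hS
  have hproj : ∀ i : Fin 3, Continuous fun p : EuclideanSpace ℂ (Fin 3) => p i :=
    fun i => (EuclideanSpace.proj (𝕜 := ℂ) i).continuous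
  have hScl : IsClosed S :=
    hc.preimage_isClosed_of_isClosed isClosed_Icc
      (isClosed_eq (hproj 1) continuous_const)
  have h0S : (0:ℝ) ∈ S := by
    constructor
    · exact ⟨le_refl _, zero_le_one⟩
    · show (γ 0) 1 = 0
      rw [hα]; rfl
  have hbdd : BddAbove S := ⟨1, fun s hs => hs.1.2⟩
  set c : ℝ := sSup S with hcdef
  have hcS : c ∈ S := hScl.csSup_mem ⟨0, h0S⟩ hbdd
  have hc01 : c ∈ Set.Icc (0:ℝ) 1 := hcS.1
  have hγc1 : (γ c) 1 = 0 := hcS.2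
  -- c ≠ 1 since γ 1 = b16 has nonzero y-coordinate
  have hc_ne : c ≠ 1 := by
    intro h
    have : (γ 1) 1 = 0 := h ▸ hγc1
    rw [hβ] at this
    have hb1 : (b16 r t) 1 = (y : ℂ) := rfl
    rw [hb1] at this
    exact absurd (Complex.ofReal_eq_zero.mp this) (ne_of_gt hypos)
  have hclt : c < 1 := lt_of_le_of_ne hc01.2 hc_ne
  -- the second component is hit on (c, 1]
  set T : Set ℝ := Set.Icc 0 1 ∩
      γ ⁻¹' {p : EuclideanSpace ℂ (Fin 3) | (p 0)^2 + (p 1 - (p 2)^2)^2 - (p 2)^4 = 0} with hT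
  have hTcl : IsClosed T := by
    refine hc.preimage_isClosed_of_isClosed isClosed_Icc (isClosed_eq ?_ continuous_const)
    fun_prop (disch := skip) <;> exact hproj _
  have hsub : Set.Ioc c 1 ⊆ T := by
    intro s hs
    have hs01 : s ∈ Set.Icc (0:ℝ) 1 := ⟨le_trans hc01.1 hs.1.le, hs.2⟩
    refine ⟨hs01, ?_⟩
    have hX : γ s ∈ X16 := hm hs01
    have hnot : s ∉ S := fun hmem => absurd (le_csSup hbdd hmem) (not_le.mpr hs.1)
    have hne : (γ s) 1 ≠ 0 := by
      intro h; exact hnot ⟨hs01, h⟩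
    exact (mul_eq_zero.mp hX).resolve_left hne
  have hcT : c ∈ T := by
    have : c ∈ closure (Set.Ioc c 1) := by
      rw [closure_Ioc (ne_of_lt hclt)]
      exact ⟨le_refl _, hclt.le⟩
    exact hTcl.closure_subset_iff.mpr hsub this
  -- so (γ c) 0 = 0
  have hx0 : (γ c) 0 = 0 := by
    have h := hcT.2
    simp only [Set.mem_preimage, Set.mem_setOf_eq] at h
    rw [hγc1] at h
    have : ((γ c) 0)^2 = 0 := by ring_nf at h ⊢; linear_combination h
    exact pow_eq_zero_iff (by norm_num) |>.mp this
  -- conclude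
  have hedist : ENNReal.ofReal t ≤ edist (γ 0) (γ c) := by
    rw [edist_dist, dist_eq_norm]
    apply ENNReal.ofReal_le_ofReal
    have hcoord : ‖(γ 0 - γ c) 0‖ ≤ ‖γ 0 - γ c‖ := coord_le_norm _ 0
    have : (γ 0 - γ c) 0 = (t : ℂ) := by
      show (γ 0) 0 - (γ c) 0 = _
      rw [hα, hx0]
      show (t:ℂ) - 0 = (t:ℂ); ring
    rw [this] at hcoord
    simpa [abs_of_pos ht.1] using hcoord
  exact hedist.trans (eVariationOn.edist_le γ (left_mem_Icc.mpr zero_le_one) hc01)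

lemma y_le (r t : ℝ) (hr : r ∈ Set.Ioo (0:ℝ) 1) (ht : t ∈ Set.Ioo (0:ℝ) (r^2)) :
    (r^2 - Real.sqrt (r^4 - t^2)) * r^2 ≤ t^2 := by
  have h2 := t2_lt r t hr ht
  have hs : Real.sqrt (r^4 - t^2) ^ 2 = r^4 - t^2 := Real.sq_sqrt (by linarith)
  have hsle : Real.sqrt (r^4 - t^2) ≤ r^2 := (sqrt_lt r t hr ht).le
  have hsnn : 0 ≤ Real.sqrt (r^4 - t^2) := Real.sqrt_nonneg _
  nlinarith

end Stmt16Aux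

open Stmt16Aux in
/-- `X16` is not Lipschitz normally embedded at `0`: the witness curves
`α, β` lie in `X16`, `‖α(t) − β(t)‖ = r² − √(r⁴−t²)`, `d_X(α(t), β(t)) ≥ t`, the ratio
`d_X/‖·‖` is unbounded as `t → 0⁺`, and consequently no neighborhood of `0` in `X16` is
Lipschitz normally embedded. -/
theorem stmt16 :
    (∀ r ∈ Set.Ioo (0 : ℝ) 1, ∀ t ∈ Set.Ioo (0 : ℝ) (r ^ 2),
      a16 r t ∈ X16 ∧ b16 r t ∈ X16 ∧
      ‖a16 r t - b16 r t‖ = r ^ 2 - Real.sqrt (r ^ 4 - t ^ 2) ∧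
      ENNReal.ofReal t ≤ innerDist X16 (a16 r t) (b16 r t)) ∧
    (∀ C : ℝ, 1 ≤ C → ∀ r ∈ Set.Ioo (0 : ℝ) 1, ∃ t ∈ Set.Ioo (0 : ℝ) (r ^ 2),
      ENNReal.ofReal (C * ‖a16 r t - b16 r t‖) < innerDist X16 (a16 r t) (b16 r t)) ∧
    (∀ U : Set (EuclideanSpace ℂ (Fin 3)), IsOpen U → (0 : EuclideanSpace ℂ (Fin 3)) ∈ U →
      ¬ ∃ C : ℝ, 1 ≤ C ∧ ∀ p ∈ X16 ∩ U, ∀ q ∈ X16 ∩ U,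
        innerDist (X16 ∩ U) p q ≤ ENNReal.ofReal (C * ‖p - q‖)) := by
  have part2 : ∀ C : ℝ, 1 ≤ C → ∀ r ∈ Set.Ioo (0 : ℝ) 1, ∃ t ∈ Set.Ioo (0 : ℝ) (r ^ 2),
      ENNReal.ofReal (C * ‖a16 r t - b16 r t‖) < innerDist X16 (a16 r t) (b16 r t) := by
    intro C hC r hr
    have hC0 : 0 < C := lt_of_lt_of_le one_pos hC
    set t : ℝ := r^2 / (2*C) with htdef
    have hrpos := hr.1
    have htpos : 0 < t := by positivity
    have htlt : t < r^2 := by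
      rw [htdef, div_lt_iff₀ (by positivity)]
      nlinarith [sq_nonneg r]
    have htmem : t ∈ Set.Ioo (0:ℝ) (r^2) := ⟨htpos, htlt⟩
    refine ⟨t, htmem, ?_⟩
    have hCt : C * t = r^2/2 := by rw [htdef]; field_simp
    have hyle := y_le r t hr htmem
    have hkey : C * ‖a16 r t - b16 r t‖ < t := by
      rw [norm_sub r t hr htmem]
      have hylet : (r^2 - Real.sqrt (r^4 - t^2)) ≤ t^2 / r^2 :=
        (le_div_iff₀ (by positivity)).mpr hyle
      have h3 : C * ((r^2 - Real.sqrt (r^4 - t^2)) * r^2) ≤ C * t^2 :=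
        mul_le_mul_of_nonneg_left hyle hC0.le
      have h4 : C * t^2 = t * r^2 / 2 := by
        rw [show C * t^2 = (C * t) * t by ring, hCt]; ring
      nlinarith [mul_pos hrpos hrpos, mul_pos htpos (mul_pos hrpos hrpos)]
    calc ENNReal.ofReal (C * ‖a16 r t - b16 r t‖) < ENNReal.ofReal t :=
          (ENNReal.ofReal_lt_ofReal_iff htpos).mpr hkey
      _ ≤ innerDist X16 (a16 r t) (b16 r t) := innerDist_ge r t hr htmem
  refine ⟨fun r hr t ht => ⟨a_mem r t, b_mem r t hr ht, norm_sub r t hr ht,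
      innerDist_ge r t hr ht⟩, part2, ?_⟩
  intro U hU h0U ⟨C, hC, hprop⟩
  obtain ⟨ε, hε, hball⟩ := Metric.isOpen_iff.mp hU 0 h0U
  set r : ℝ := min ε 1 / 2 with hrdef
  have hrpos : 0 < r := by positivity
  have hrε : r ≤ ε / 2 := by
    rw [hrdef]; gcongr; exact min_le_left _ _
  have hr1 : r ≤ 1/2 := by
    rw [hrdef]; gcongr; exact min_le_right _ _
  have hrmem : r ∈ Set.Ioo (0:ℝ) 1 := ⟨hrpos, by linarith⟩
  obtain ⟨t, htmem, hlt⟩ := part2 C hC r hrmem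
  set y : ℝ := r^2 - Real.sqrt (r^4 - t^2) with hy
  have hypos := y_pos r t hrmem htmem
  have hyle : y ≤ r^2 := by
    have := Real.sqrt_nonneg (r^4 - t^2); rw [hy]; linarith
  have htlt := htmem.2
  have htpos := htmem.1
  have ht2 : t^2 < r^4 := t2_lt r t hrmem htmem
  have hr2e : r^2 ≤ ε^2/4 := by nlinarith
  have hrsq : r^2 ≤ 1/4 := by nlinarith
  have hr4 : r^4 ≤ r^2/4 := by
    nlinarith [mul_le_mul_of_nonneg_left hrsq (sq_nonneg r)]
  have hy2 : y^2 ≤ r^4 := by nlinarith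
  have hε2 : 0 < ε^2 := by positivity
  -- both points are in the ball of radius ε around 0
  have hnorm_a : ‖a16 r t‖ < ε := by
    rw [a16, mkc3, EuclideanSpace.norm_eq, Fin.sum_univ_three]
    simp only [WithLp.equiv_symm_apply, PiLp.toLp_apply, Matrix.cons_val_zero, Matrix.cons_val_one,
      Matrix.head_cons, Matrix.cons_val_two, Matrix.tail_cons, Complex.norm_real,
      norm_zero, Real.norm_eq_abs]
    rw [Real.sqrt_lt' hε]
    rw [sq_abs, sq_abs]
    nlinarith [ht2, hr4, hr2e, hε2]
  have hnorm_b : ‖b16 r t‖ < ε := by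
    rw [b16, mkc3, EuclideanSpace.norm_eq, Fin.sum_univ_three]
    simp only [WithLp.equiv_symm_apply, PiLp.toLp_apply, Matrix.cons_val_zero, Matrix.cons_val_one,
      Matrix.head_cons, Matrix.cons_val_two, Matrix.tail_cons, Complex.norm_real,
      Real.norm_eq_abs]
    rw [Real.sqrt_lt' hε]
    rw [sq_abs, sq_abs, sq_abs]
    nlinarith [ht2, hr4, hr2e, hε2, hy2]
  have haU : a16 r t ∈ U := hball (by rwa [Metric.mem_ball, dist_zero_right])
  have hbU : b16 r t ∈ U := hball (by rwa [Metric.mem_ball, dist_zero_right])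
  have hmono : innerDist X16 (a16 r t) (b16 r t) ≤ innerDist (X16 ∩ U) (a16 r t) (b16 r t) := by
    rw [innerDist, innerDist]
    refine le_iInf₂ fun γ hγ => ?_
    refine iInf₂_le γ ⟨hγ.1, fun s hs => (hγ.2.1 hs).1, hγ.2.2⟩
  have h := hprop (a16 r t) ⟨a_mem r t, haU⟩ (b16 r t) ⟨b_mem r t hrmem htmem, hbU⟩
  exact absurd (hlt.trans_le (hmono.trans h)) (lt_irrefl _)
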